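/- Let c ≥ 1 and let a = (c, a_2,…,a_m) and b = (c, b_2,…,b_t) be compositions of n with m ≥ 2 and t ≥ 2 (Component Elimination). Set a' = (a_2,…,a_m) and b' = (b_2,…,b_t), which are compositions of n − c. Then the number of cycle components of M(a|b) equals the number of cycle components of M(a'|b') plus ⌊c/2⌋, and the number of path components of M(a|b) equals the number of path components of M(a'|b') plus (c mod 2); in particular ind(a,b) = ind(a',b') + c. -/

import Mathlib

open scoped Classical

/-- Vertices `j` and `k` of `{1,…,n}` (encoded as `Fin n`, vertex `v` is `v+1`) are joined by
an edge determined by the composition `a`. -/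
def CompEdge {n : ℕ} (a : Composition n) (j k : Fin n) : Prop :=
  j ≠ k ∧ ∃ i : Fin a.length,
    a.sizeUpTo i < (j : ℕ) + 1 ∧ (j : ℕ) + 1 ≤ a.sizeUpTo (i + 1) ∧
    a.sizeUpTo i < (k : ℕ) + 1 ∧ (k : ℕ) + 1 ≤ a.sizeUpTo (i + 1) ∧
    ((j : ℕ) + 1) + ((k : ℕ) + 1) = 2 * a.sizeUpTo i + a.blocksFun i + 1

lemma CompEdge.symm {n : ℕ} {a : Composition n} {j k : Fin n} (h : CompEdge a j k) :
    CompEdge a k j := by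
  obtain ⟨hne, i, h1, h2, h3, h4, h5⟩ := h
  exact ⟨hne.symm, i, h3, h4, h1, h2, by omega⟩

/-- The meander `M(a|b)` of the pair of compositions `(a, b)` of `n`. -/
def Meander {n : ℕ} (a b : Composition n) : SimpleGraph (Fin n) where
  Adj j k := CompEdge a j k ∨ CompEdge b j k
  symm := by
    constructor
    intro j k h
    rcases h with h | h
    · exact Or.inl h.symm
    · exact Or.inr h.symm
  loopless := by
    constructor
    intro j h
    rcases h with ⟨hne, _⟩ | ⟨hne, _⟩ <;> exact hne rfl

/-- A connected component of the meander is a cycle if each of its vertices is incident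
to both a top edge and a bottom edge. -/
def IsCycleComp {n : ℕ} (a b : Composition n) (c : (Meander a b).ConnectedComponent) : Prop :=
  ∀ v : Fin n, (Meander a b).connectedComponentMk v = c →
    (∃ w, CompEdge a v w) ∧ (∃ w, CompEdge b v w)

/-- The number of cycle components of the meander `M(a|b)`. -/
noncomputable def cycleCount {n : ℕ} (a b : Composition n) : ℕ :=
  Nat.card {c : (Meander a b).ConnectedComponent // IsCycleComp a b c}

/-- The number of path components of the meander `M(a|b)`. -/
noncomputable def pathCount {n : ℕ} (a b : Composition n) : ℕ :=
  Nat.card {c : (Meander a b).ConnectedComponent // ¬ IsCycleComp a b c}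

/-- The index `ind(a,b) = 2C + P - 1` of a pair of compositions of `n`. -/
noncomputable def seaweedInd {n : ℕ} (a b : Composition n) : ℕ :=
  2 * cycleCount a b + pathCount a b - 1

/-- `C(n,k)`: the number of ordered pairs of compositions of `n` of index `k`. -/
noncomputable def Cnk (n k : ℕ) : ℕ :=
  Nat.card {p : Composition n × Composition n // seaweedInd p.1 p.2 = k}

section ComponentElimAux

/-- Lift a function constant on adjacent vertices to connected components. -/
def ccLift {V : Type*} {β : Sort*} {G : SimpleGraph V} (f : V → β)
    (h : ∀ v w, G.Adj v w → f v = f w) : G.ConnectedComponent → β :=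
  Quot.lift f fun v w r => by
    obtain ⟨p⟩ := r
    induction p with
    | nil => rfl
    | cons hadj _ ih => exact (h _ _ hadj).trans ih

@[simp] lemma ccLift_mk {V : Type*} {β : Sort*} {G : SimpleGraph V} (f : V → β)
    (h : ∀ v w, G.Adj v w → f v = f w) (v : V) :
    ccLift f h (G.connectedComponentMk v) = f v := rfl

lemma compEdge_mk {n : ℕ} (a : Composition n) {j k : Fin n} (hne : (j : ℕ) ≠ (k : ℕ))
    (m : ℕ) (hm : m < a.length)
    (h1 : a.sizeUpTo m < (j : ℕ) + 1) (h2 : (j : ℕ) + 1 ≤ a.sizeUpTo (m + 1))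
    (h3 : a.sizeUpTo m < (k : ℕ) + 1) (h4 : (k : ℕ) + 1 ≤ a.sizeUpTo (m + 1))
    (h5 : ((j : ℕ) + 1) + ((k : ℕ) + 1) = a.sizeUpTo m + a.sizeUpTo (m + 1) + 1) :
    CompEdge a j k := by
  have hs := a.sizeUpTo_succ' ⟨m, hm⟩
  refine ⟨fun he => hne (congrArg Fin.val he), ⟨m, hm⟩, h1, h2, h3, h4, ?_⟩
  simp only [Fin.val_mk] at hs ⊢
  omega

lemma compEdge_elim {n : ℕ} {a : Composition n} {j k : Fin n} (h : CompEdge a j k) :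
    (j : ℕ) ≠ (k : ℕ) ∧ ∃ m : ℕ, m < a.length ∧
      a.sizeUpTo m < (j : ℕ) + 1 ∧ (j : ℕ) + 1 ≤ a.sizeUpTo (m + 1) ∧
      a.sizeUpTo m < (k : ℕ) + 1 ∧ (k : ℕ) + 1 ≤ a.sizeUpTo (m + 1) ∧
      ((j : ℕ) + 1) + ((k : ℕ) + 1) = a.sizeUpTo m + a.sizeUpTo (m + 1) + 1 := by
  obtain ⟨hne, i, h1, h2, h3, h4, h5⟩ := h
  have hs := a.sizeUpTo_succ' i
  exact ⟨fun he => hne (Fin.ext he), (i : ℕ), i.isLt, h1, h2, h3, h4, by omega⟩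

lemma ce_sizeUpTo {n c : ℕ} {a : Composition n} {as : List ℕ} (ha : a.blocks = c :: as)
    {a' : Composition (n - c)} (ha' : a'.blocks = as) (k : ℕ) :
    a.sizeUpTo (k + 1) = c + a'.sizeUpTo k := by
  simp [Composition.sizeUpTo, ha, ha', List.take_succ_cons, List.sum_cons]

lemma ce_length {n c : ℕ} {a : Composition n} {as : List ℕ} (ha : a.blocks = c :: as)
    {a' : Composition (n - c)} (ha' : a'.blocks = as) :
    a.length = a'.length + 1 := by
  simp [Composition.length, ha, ha']

lemma ce_hn {n c : ℕ} {a : Composition n} {as : List ℕ} (ha : a.blocks = c :: as)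
    {a' : Composition (n - c)} (ha' : a'.blocks = as) : n = c + (n - c) := by
  have h1 := a.blocks_sum
  have h2 := a'.blocks_sum
  rw [ha, List.sum_cons] at h1
  rw [ha'] at h2
  omega

lemma ce_low {n c : ℕ} {a : Composition n} {as : List ℕ} (ha : a.blocks = c :: as)
    {a' : Composition (n - c)} (ha' : a'.blocks = as)
    {j k : Fin n} (h : CompEdge a j k) (hj : (j : ℕ) < c) :
    (k : ℕ) < c ∧ (j : ℕ) + (k : ℕ) + 1 = c := by
  obtain ⟨hne, m, hm, h1, h2, h3, h4, h5⟩ := compEdge_elim h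
  have h0 := a.sizeUpTo_zero
  rcases m with _ | m
  · have e1 := ce_sizeUpTo ha ha' 0
    have e0 := a'.sizeUpTo_zero
    constructor <;> omega
  · have e1 := ce_sizeUpTo ha ha' m
    exfalso
    omega

lemma ce_low_rev {n c : ℕ} {a : Composition n} {as : List ℕ} (ha : a.blocks = c :: as)
    {a' : Composition (n - c)} (ha' : a'.blocks = as)
    {j k : Fin n} (hne : (j : ℕ) ≠ (k : ℕ)) (hj : (j : ℕ) < c) (hk : (k : ℕ) < c)
    (hsum : (j : ℕ) + (k : ℕ) + 1 = c) : CompEdge a j k := by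
  have hlen : 0 < a.length := by rw [ce_length ha ha']; omega
  have h0 := a.sizeUpTo_zero
  have e1 := ce_sizeUpTo ha ha' 0
  have e0 := a'.sizeUpTo_zero
  exact compEdge_mk a hne 0 hlen (by omega) (by omega) (by omega) (by omega) (by omega)

lemma ce_high {n c : ℕ} {a : Composition n} {as : List ℕ} (ha : a.blocks = c :: as)
    {a' : Composition (n - c)} (ha' : a'.blocks = as)
    {j k : Fin n} (h : CompEdge a j k) (hj : c ≤ (j : ℕ))
    {j' k' : Fin (n - c)} (hj' : (j' : ℕ) + c = (j : ℕ)) (hk' : (k' : ℕ) + c = (k : ℕ)) :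
    CompEdge a' j' k' := by
  obtain ⟨hne, m, hm, h1, h2, h3, h4, h5⟩ := compEdge_elim h
  rcases m with _ | m
  · have h0 := a.sizeUpTo_zero
    have e1 := ce_sizeUpTo ha ha' 0
    have e0 := a'.sizeUpTo_zero
    exfalso
    omega
  · have e1 := ce_sizeUpTo ha ha' m
    have e2 := ce_sizeUpTo ha ha' (m + 1)
    have hm' : m < a'.length := by have := ce_length ha ha'; omega
    exact compEdge_mk a' (by omega) m hm' (by omega) (by omega) (by omega) (by omega) (by omega)

lemma ce_shift {n c : ℕ} {a : Composition n} {as : List ℕ} (ha : a.blocks = c :: as)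
    {a' : Composition (n - c)} (ha' : a'.blocks = as)
    {v w : Fin (n - c)} (h : CompEdge a' v w) {j k : Fin n}
    (hj : (j : ℕ) = (v : ℕ) + c) (hk : (k : ℕ) = (w : ℕ) + c) : CompEdge a j k := by
  obtain ⟨hne, m, hm, h1, h2, h3, h4, h5⟩ := compEdge_elim h
  have e1 := ce_sizeUpTo ha ha' m
  have e2 := ce_sizeUpTo ha ha' (m + 1)
  have hm2 : m + 1 < a.length := by have := ce_length ha ha'; omega
  exact compEdge_mk a (by omega) (m + 1) hm2 (by omega) (by omega) (by omega) (by omega) (by omega)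

/-- The vertex-level map classifying each vertex of `M(a|b)`. -/
def ceφ {n : ℕ} (c : ℕ) (hn : n = c + (n - c)) (a' b' : Composition (n - c))
    (v : Fin n) : Fin ((c + 1) / 2) ⊕ (Meander a' b').ConnectedComponent :=
  if h : (v : ℕ) < c then Sum.inl ⟨min (v : ℕ) (c - 1 - (v : ℕ)), by omega⟩
  else Sum.inr ((Meander a' b').connectedComponentMk ⟨(v : ℕ) - c, by have := v.isLt; omega⟩)

lemma ceφ_lt {n c : ℕ} (hn : n = c + (n - c)) (a' b' : Composition (n - c))
    {v : Fin n} (h : (v : ℕ) < c) :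
    ceφ c hn a' b' v = Sum.inl ⟨min (v : ℕ) (c - 1 - (v : ℕ)), by omega⟩ := dif_pos h

lemma ceφ_ge {n c : ℕ} (hn : n = c + (n - c)) (a' b' : Composition (n - c))
    {v : Fin n} (h : ¬ (v : ℕ) < c) :
    ceφ c hn a' b' v = Sum.inr ((Meander a' b').connectedComponentMk
      ⟨(v : ℕ) - c, by have := v.isLt; omega⟩) := dif_neg h

lemma ceφ_adj {n c : ℕ} {a b : Composition n} {as bs : List ℕ} {a' b' : Composition (n - c)}
    (hc : 1 ≤ c) (hn : n = c + (n - c))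
    (ha : a.blocks = c :: as) (hb : b.blocks = c :: bs)
    (ha' : a'.blocks = as) (hb' : b'.blocks = bs) :
    ∀ v w : Fin n, (Meander a b).Adj v w → ceφ c hn a' b' v = ceφ c hn a' b' w := by
  intro v w hvw
  by_cases hv : (v : ℕ) < c
  · have hlow : (w : ℕ) < c ∧ (v : ℕ) + (w : ℕ) + 1 = c := by
      rcases hvw with h | h
      exacts [ce_low ha ha' h hv, ce_low hb hb' h hv]
    rw [ceφ_lt hn a' b' hv, ceφ_lt hn a' b' hlow.1]
    simp only [Sum.inl.injEq, Fin.mk.injEq]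
    omega
  · have hv' : c ≤ (v : ℕ) := not_lt.mp hv
    have hw : ¬ (w : ℕ) < c := by
      intro hwc
      rcases hvw with h | h
      · exact hv (ce_low ha ha' h.symm hwc).1
      · exact hv (ce_low hb hb' h.symm hwc).1
    rw [ceφ_ge hn a' b' hv, ceφ_ge hn a' b' hw]
    simp only [Sum.inr.injEq]
    apply SimpleGraph.ConnectedComponent.connectedComponentMk_eq_of_adj
    rcases hvw with h | h
    · exact Or.inl (ce_high ha ha' h hv' (by simp only [Fin.val_mk]; omega)
        (by simp only [Fin.val_mk]; omega))
    · exact Or.inr (ce_high hb hb' h hv' (by simp only [Fin.val_mk]; omega)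
        (by simp only [Fin.val_mk]; omega))

lemma ceShift_adj {n c : ℕ} {a b : Composition n} {as bs : List ℕ} {a' b' : Composition (n - c)}
    (hn : n = c + (n - c))
    (ha : a.blocks = c :: as) (hb : b.blocks = c :: bs)
    (ha' : a'.blocks = as) (hb' : b'.blocks = bs) :
    ∀ v w : Fin (n - c), (Meander a' b').Adj v w →
      (Meander a b).connectedComponentMk ⟨(v : ℕ) + c, by have := v.isLt; omega⟩ =
      (Meander a b).connectedComponentMk ⟨(w : ℕ) + c, by have := w.isLt; omega⟩ := by
  intro v w hvw
  apply SimpleGraph.ConnectedComponent.connectedComponentMk_eq_of_adj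
  rcases hvw with h | h
  · exact Or.inl (ce_shift ha ha' h rfl rfl)
  · exact Or.inr (ce_shift hb hb' h rfl rfl)

/-- The equivalence between the components of `M(a|b)` and the components of the first
block together with the components of `M(a'|b')`. -/
def ceEquiv {n c : ℕ} {a b : Composition n} {as bs : List ℕ} {a' b' : Composition (n - c)}
    (hc : 1 ≤ c) (hn : n = c + (n - c))
    (ha : a.blocks = c :: as) (hb : b.blocks = c :: bs)
    (ha' : a'.blocks = as) (hb' : b'.blocks = bs) :
    (Meander a b).ConnectedComponent ≃ (Fin ((c + 1) / 2) ⊕ (Meander a' b').ConnectedComponent)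
    where
  toFun := ccLift (ceφ c hn a' b') (ceφ_adj hc hn ha hb ha' hb')
  invFun := Sum.elim
    (fun i => (Meander a b).connectedComponentMk ⟨(i : ℕ), by have := i.isLt; omega⟩)
    (ccLift (fun v => (Meander a b).connectedComponentMk ⟨(v : ℕ) + c, by have := v.isLt; omega⟩)
      (ceShift_adj hn ha hb ha' hb'))
  left_inv := by
    refine fun K => SimpleGraph.ConnectedComponent.ind (fun v => ?_) K
    simp only [ccLift_mk]
    by_cases h : (v : ℕ) < c
    · rw [ceφ_lt hn a' b' h]
      simp only [Sum.elim_inl]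
      by_cases hm : min (v : ℕ) (c - 1 - (v : ℕ)) = (v : ℕ)
      · exact congrArg _ (Fin.ext (by simp only [Fin.val_mk]; omega))
      · apply SimpleGraph.ConnectedComponent.connectedComponentMk_eq_of_adj
        exact Or.inl (ce_low_rev ha ha' (by simp only [Fin.val_mk]; omega)
          (by simp only [Fin.val_mk]; omega) h (by simp only [Fin.val_mk]; omega))
    · rw [ceφ_ge hn a' b' h]
      simp only [Sum.elim_inr, ccLift_mk]
      exact congrArg _ (Fin.ext (by simp only [Fin.val_mk]; omega))
  right_inv := by
    rintro (i | K)
    · simp only [Sum.elim_inl, ccLift_mk]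
      rw [ceφ_lt hn a' b' (by have := i.isLt; simp only [Fin.val_mk]; omega)]
      simp only [Sum.inl.injEq]
      exact Fin.ext (by have := i.isLt; simp only [Fin.val_mk]; omega)
    · simp only [Sum.elim_inr]
      refine SimpleGraph.ConnectedComponent.ind (fun v => ?_) K
      simp only [ccLift_mk]
      rw [ceφ_ge hn a' b' (by simp only [Fin.val_mk]; omega)]
      simp only [Sum.inr.injEq]
      exact congrArg _ (Fin.ext (by simp only [Fin.val_mk]; omega))

end ComponentElimAux

theorem component_elimination (n : ℕ) (a b : Composition n) (c : ℕ) (as bs : List ℕ)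
    (hc : 1 ≤ c)
    (ha : a.blocks = c :: as) (hb : b.blocks = c :: bs)
    (has : as ≠ []) (hbs : bs ≠ [])
    (a' b' : Composition (n - c))
    (ha' : a'.blocks = as) (hb' : b'.blocks = bs) :
    cycleCount a b = cycleCount a' b' + c / 2 ∧
      pathCount a b = pathCount a' b' + c % 2 ∧
      seaweedInd a b = seaweedInd a' b' + c := by
  classical
  have hn : n = c + (n - c) := ce_hn ha ha'
  have hnc : 1 ≤ n - c := by
    obtain ⟨x, xs, rfl⟩ := List.exists_cons_of_ne_nil has
    have hx : 0 < x := a'.blocks_pos (by rw [ha']; exact List.mem_cons_self)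
    have h2 := a'.blocks_sum
    rw [ha', List.sum_cons] at h2
    omega
  set E := ceEquiv hc hn ha hb ha' hb' with hE
  have hEmk : ∀ v : Fin n, E ((Meander a b).connectedComponentMk v) = ceφ c hn a' b' v := by
    intro v; rw [hE]; rfl
  have hmkiff : ∀ u v : Fin n,
      (Meander a b).connectedComponentMk u = (Meander a b).connectedComponentMk v ↔
        ceφ c hn a' b' u = ceφ c hn a' b' v := by
    intro u v
    constructor
    · intro h
      have := congrArg E h
      rwa [hEmk, hEmk] at this
    · intro h
      exact E.injective (by rwa [hEmk, hEmk])
  have hchar : ∀ K : (Meander a b).ConnectedComponent,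
      IsCycleComp a b K ↔ Sum.elim (fun i : Fin ((c + 1) / 2) => 2 * (i : ℕ) + 1 ≠ c)
        (fun K' => IsCycleComp a' b' K') (E K) := by
    refine fun K => SimpleGraph.ConnectedComponent.ind (fun v => ?_) K
    rw [hEmk]
    by_cases hv : (v : ℕ) < c
    · rw [ceφ_lt hn a' b' hv]
      simp only [Sum.elim_inl, Fin.val_mk]
      constructor
      · intro h
        obtain ⟨⟨w, hw⟩, -⟩ := h v rfl
        have hlow := ce_low ha ha' hw hv
        have hne : (v : ℕ) ≠ (w : ℕ) := (compEdge_elim hw).1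
        omega
      · intro h u hu
        rw [hmkiff u v, ceφ_lt hn a' b' hv] at hu
        by_cases hu' : (u : ℕ) < c
        · rw [ceφ_lt hn a' b' hu'] at hu
          simp only [Sum.inl.injEq, Fin.mk.injEq] at hu
          have hwlt : c - 1 - (u : ℕ) < n := by omega
          refine ⟨⟨⟨c - 1 - (u : ℕ), hwlt⟩, ?_⟩, ⟨⟨c - 1 - (u : ℕ), hwlt⟩, ?_⟩⟩
          · exact ce_low_rev ha ha' (by simp only [Fin.val_mk]; omega) hu'
              (by simp only [Fin.val_mk]; omega) (by simp only [Fin.val_mk]; omega)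
          · exact ce_low_rev hb hb' (by simp only [Fin.val_mk]; omega) hu'
              (by simp only [Fin.val_mk]; omega) (by simp only [Fin.val_mk]; omega)
        · rw [ceφ_ge hn a' b' hu'] at hu
          simp at hu
    · rw [ceφ_ge hn a' b' hv]
      simp only [Sum.elim_inr]
      constructor
      · intro h u' hu'
        have hun : (u' : ℕ) + c < n := by have := u'.isLt; omega
        have hmk : (Meander a b).connectedComponentMk ⟨(u' : ℕ) + c, hun⟩ =
            (Meander a b).connectedComponentMk v := by
          rw [hmkiff, ceφ_ge hn a' b' (by simp only [Fin.val_mk]; omega), ceφ_ge hn a' b' hv]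
          simp only [Sum.inr.injEq]
          convert hu' using 2
          exact Fin.ext (by simp only [Fin.val_mk]; omega)
        obtain ⟨⟨w, hw⟩, ⟨w2, hw2⟩⟩ := h _ hmk
        have hcu : c ≤ ((⟨(u' : ℕ) + c, hun⟩ : Fin n) : ℕ) := by
          simp only [Fin.val_mk]; omega
        have hwc : c ≤ (w : ℕ) := by
          by_contra hwc'
          have hl := (ce_low ha ha' hw.symm (by omega)).1
          simp only [Fin.val_mk] at hl
          omega
        have hw2c : c ≤ (w2 : ℕ) := by
          by_contra hwc'
          have hl := (ce_low hb hb' hw2.symm (by omega)).1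
          simp only [Fin.val_mk] at hl
          omega
        have hwb : (w : ℕ) - c < n - c := by have := w.isLt; omega
        have hw2b : (w2 : ℕ) - c < n - c := by have := w2.isLt; omega
        exact ⟨⟨⟨(w : ℕ) - c, hwb⟩, ce_high ha ha' hw hcu rfl
            (by simp only [Fin.val_mk]; omega)⟩,
          ⟨⟨(w2 : ℕ) - c, hw2b⟩, ce_high hb hb' hw2 hcu rfl
            (by simp only [Fin.val_mk]; omega)⟩⟩
      · intro h u hu
        rw [hmkiff u v, ceφ_ge hn a' b' hv] at hu
        by_cases hu' : (u : ℕ) < c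
        · rw [ceφ_lt hn a' b' hu'] at hu
          simp at hu
        · rw [ceφ_ge hn a' b' hu'] at hu
          simp only [Sum.inr.injEq] at hu
          obtain ⟨⟨w', hw'⟩, ⟨w2', hw2'⟩⟩ := h _ hu
          have hwb : (w' : ℕ) + c < n := by have := w'.isLt; omega
          have hw2b : (w2' : ℕ) + c < n := by have := w2'.isLt; omega
          exact ⟨⟨⟨(w' : ℕ) + c, hwb⟩, ce_shift ha ha' hw'
              (by simp only [Fin.val_mk]; omega) rfl⟩,
            ⟨⟨(w2' : ℕ) + c, hw2b⟩, ce_shift hb hb' hw2'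
              (by simp only [Fin.val_mk]; omega) rfl⟩⟩
  have hchar2 : ∀ K : (Meander a b).ConnectedComponent,
      ¬ IsCycleComp a b K ↔ Sum.elim (fun i : Fin ((c + 1) / 2) => ¬ (2 * (i : ℕ) + 1 ≠ c))
        (fun K' => ¬ IsCycleComp a' b' K') (E K) := by
    intro K
    rw [hchar K]
    cases hEK : E K with
    | inl i => simp
    | inr K' => simp
  haveI : Finite (Meander a' b').ConnectedComponent := Quot.finite _
  have e1 : {i : Fin ((c + 1) / 2) // 2 * (i : ℕ) + 1 ≠ c} ≃ Fin (c / 2) :=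
    { toFun := fun x => ⟨(x.1 : ℕ), by have := x.1.isLt; have := x.2; omega⟩
      invFun := fun i => ⟨⟨(i : ℕ), by have := i.isLt; omega⟩,
        by have := i.isLt; simp only [Fin.val_mk]; omega⟩
      left_inv := fun x => rfl
      right_inv := fun i => rfl }
  have e2 : {i : Fin ((c + 1) / 2) // ¬ (2 * (i : ℕ) + 1 ≠ c)} ≃ Fin (c % 2) :=
    { toFun := fun x => ⟨0, by have := not_not.mp x.2; have := x.1.isLt; omega⟩
      invFun := fun j => ⟨⟨c / 2, by have := j.isLt; omega⟩,
        by have := j.isLt; simp only [Fin.val_mk]; omega⟩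
      left_inv := fun x => Subtype.ext (Fin.ext
        (by have := not_not.mp x.2; simp only [Fin.val_mk]; omega))
      right_inv := fun j => Fin.ext (by have := j.isLt; simp only [Fin.val_mk]; omega) }
  have hcycEq : cycleCount a b = c / 2 + cycleCount a' b' := by
    have e := (E.subtypeEquiv hchar).trans Equiv.subtypeSum
    unfold cycleCount
    rw [Nat.card_congr e, Nat.card_sum]
    congr 1
    exact (Nat.card_congr e1).trans (by simp [Nat.card_eq_fintype_card])
  have hpathEq : pathCount a b = c % 2 + pathCount a' b' := by
    have e := (E.subtypeEquiv hchar2).trans Equiv.subtypeSum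
    unfold pathCount
    rw [Nat.card_congr e, Nat.card_sum]
    congr 1
    exact (Nat.card_congr e2).trans (by simp [Nat.card_eq_fintype_card])
  have hKey : 1 ≤ cycleCount a' b' + pathCount a' b' := by
    by_cases hK : IsCycleComp a' b' ((Meander a' b').connectedComponentMk ⟨0, hnc⟩)
    · haveI : Nonempty {K // IsCycleComp a' b' K} := ⟨⟨_, hK⟩⟩
      have := Nat.card_pos (α := {K // IsCycleComp a' b' K})
      unfold cycleCount
      omega
    · haveI : Nonempty {K // ¬ IsCycleComp a' b' K} := ⟨⟨_, hK⟩⟩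
      have := Nat.card_pos (α := {K // ¬ IsCycleComp a' b' K})
      unfold pathCount
      omega
  refine ⟨by omega, by omega, ?_⟩
  unfold seaweedInd
  omega
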